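/- Let γ ∈ (0,1], λ > 0, and let μ be a probability measure on [0,∞) whose Laplace transform satisfies ∫₀^∞ e^{−u·s} dμ(s) = exp(−u^γ) for every real u ≥ 0. Then for every z ∈ [0,1], ∑_{k=0}^∞ z^k · (∫₀^∞ e^{−λ^{1/γ} s} (λ^{1/γ} s)^k / k! dμ(s)) = exp(−λ(1−z)^γ). In particular, the numbers p_k = ∫₀^∞ e^{−λ^{1/γ}s}(λ^{1/γ}s)^k/k! dμ(s) form a probability distribution on ℕ whose probability generating function is exp(−λ(1−z)^γ). -/

import Mathlib

open MeasureTheory ENNReal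

private lemma exp_tsum_aux (x : ℝ) : ∑' k : ℕ, x ^ k / (Nat.factorial k) = Real.exp x := by
  rw [Real.exp_eq_exp_ℝ, NormedSpace.exp_eq_tsum_div]

open MeasureTheory in
/-- A Poisson distribution with random intensity `λ^{1/γ}·S_γ`, where `S_γ`
is positive `γ`-stable with Laplace transform `exp(-u^γ)`, is exactly the
positive discrete stable distribution `PDS(γ,λ)` with PGF `exp(-λ(1-z)^γ)`. -/
theorem pds_poisson_mixture (γ lam : ℝ) (hγ : γ ∈ Set.Ioc (0 : ℝ) 1) (hlam : 0 < lam)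
    (μ : Measure ℝ) [IsProbabilityMeasure μ]
    (hsupp : ∀ᵐ s ∂μ, 0 ≤ s)
    (hLap : ∀ u : ℝ, 0 ≤ u → ∫ s, Real.exp (-u * s) ∂μ = Real.exp (-(u ^ γ))) :
    (∀ z ∈ Set.Icc (0 : ℝ) 1,
      ∑' k : ℕ, z ^ k *
          (∫ s, Real.exp (-(lam ^ (1 / γ)) * s) * (lam ^ (1 / γ) * s) ^ k /
            (Nat.factorial k) ∂μ)
        = Real.exp (-lam * (1 - z) ^ γ)) ∧
    (∀ k : ℕ, 0 ≤ ∫ s, Real.exp (-(lam ^ (1 / γ)) * s) * (lam ^ (1 / γ) * s) ^ k /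
        (Nat.factorial k) ∂μ) ∧
    HasSum (fun k : ℕ => ∫ s, Real.exp (-(lam ^ (1 / γ)) * s) * (lam ^ (1 / γ) * s) ^ k /
        (Nat.factorial k) ∂μ) 1 := by
  obtain ⟨hγ0, hγ1⟩ := hγ
  set c : ℝ := lam ^ (1 / γ) with hc_def
  have hc : 0 < c := Real.rpow_pos_of_pos hlam _
  have hcγ : c ^ γ = lam := by
    rw [hc_def, ← Real.rpow_mul hlam.le, one_div_mul_cancel hγ0.ne', Real.rpow_one]
  have key : ∀ z ∈ Set.Icc (0 : ℝ) 1,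
      ∑' k : ℕ, z ^ k * (∫ s, Real.exp (-c * s) * (c * s) ^ k / (Nat.factorial k) ∂μ)
        = Real.exp (-lam * (1 - z) ^ γ) := by
    intro z hz
    obtain ⟨hz0, hz1⟩ := hz
    set f : ℕ → ℝ → ℝ :=
      fun k s => z ^ k * (Real.exp (-c * s) * (c * s) ^ k / (Nat.factorial k)) with hf_def
    have hcont : ∀ k, Continuous (f k) := by intro k; fun_prop
    have hmeas : ∀ k, AEStronglyMeasurable (f k) μ :=
      fun k => (hcont k).aestronglyMeasurable
    have h1 : ∀ s : ℝ, ∀ k : ℕ,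
        f k s = Real.exp (-c * s) * ((z * (c * s)) ^ k / (Nat.factorial k)) := by
      intro s k
      simp only [hf_def, mul_pow]
      ring
    have hsum_pt : ∀ s : ℝ, Summable (fun k => f k s) := by
      intro s
      have : (fun k => f k s)
          = fun k => Real.exp (-c * s) * ((z * (c * s)) ^ k / (Nat.factorial k)) :=
        funext (h1 s)
      rw [this]
      exact (Real.summable_pow_div_factorial _).mul_left _
    have hpt : ∀ s : ℝ, ∑' k, f k s = Real.exp (-(c * (1 - z)) * s) := by
      intro s
      rw [tsum_congr (h1 s), tsum_mul_left, exp_tsum_aux, ← Real.exp_add]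
      congr 1
      ring
    have hbound : ∑' k, ∫⁻ s, ‖f k s‖₊ ∂μ ≠ ⊤ := by
      have hswap : ∑' k, ∫⁻ s, (‖f k s‖₊ : ℝ≥0∞) ∂μ
          = ∫⁻ s, ∑' k, (‖f k s‖₊ : ℝ≥0∞) ∂μ :=
        (lintegral_tsum fun k => (hmeas k).enorm).symm
      rw [hswap]
      have hle : ∫⁻ s, ∑' k, (‖f k s‖₊ : ℝ≥0∞) ∂μ ≤ 1 := by
        have hae : ∀ᵐ s ∂μ, ∑' k, (‖f k s‖₊ : ℝ≥0∞) ≤ 1 := by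
          filter_upwards [hsupp] with s hs
          have hf_nonneg : ∀ k, 0 ≤ f k s := by
            intro k
            rw [h1]
            have : 0 ≤ z * (c * s) := mul_nonneg hz0 (mul_nonneg hc.le hs)
            positivity
          have heq : ∑' k, (‖f k s‖₊ : ℝ≥0∞) = ENNReal.ofReal (∑' k, f k s) := by
            rw [ENNReal.ofReal_tsum_of_nonneg hf_nonneg (hsum_pt s)]
            exact tsum_congr fun k => (Real.enorm_eq_ofReal (hf_nonneg k)).symm |>.symm
          rw [heq, hpt s]
          have hexp : Real.exp (-(c * (1 - z)) * s) ≤ 1 := by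
            rw [Real.exp_le_one_iff]
            have : 0 ≤ c * (1 - z) * s :=
              mul_nonneg (mul_nonneg hc.le (by linarith)) hs
            linarith
          calc ENNReal.ofReal (Real.exp (-(c * (1 - z)) * s))
              ≤ ENNReal.ofReal 1 := ENNReal.ofReal_le_ofReal hexp
            _ = 1 := ENNReal.ofReal_one
        calc ∫⁻ s, ∑' k, (‖f k s‖₊ : ℝ≥0∞) ∂μ ≤ ∫⁻ _, 1 ∂μ := lintegral_mono_ae hae
          _ = 1 := by simp
      exact ne_top_of_le_ne_top one_ne_top hle
    have hint : ∫ s, ∑' k, f k s ∂μ = ∑' k, ∫ s, f k s ∂μ := integral_tsum hmeas hbound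
    calc ∑' k : ℕ, z ^ k * (∫ s, Real.exp (-c * s) * (c * s) ^ k / (Nat.factorial k) ∂μ)
        = ∑' k, ∫ s, f k s ∂μ := by
          refine tsum_congr fun k => ?_
          rw [hf_def]
          exact (integral_const_mul _ _).symm
      _ = ∫ s, ∑' k, f k s ∂μ := hint.symm
      _ = ∫ s, Real.exp (-(c * (1 - z)) * s) ∂μ := by
          exact integral_congr_ae (Filter.Eventually.of_forall hpt)
      _ = Real.exp (-((c * (1 - z)) ^ γ)) :=
          hLap _ (mul_nonneg hc.le (by linarith))
      _ = Real.exp (-lam * (1 - z) ^ γ) := by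
          rw [Real.mul_rpow hc.le (by linarith), hcγ, neg_mul]
  have hnn : ∀ k : ℕ,
      0 ≤ ∫ s, Real.exp (-c * s) * (c * s) ^ k / (Nat.factorial k) ∂μ := by
    intro k
    refine integral_nonneg_of_ae ?_
    filter_upwards [hsupp] with s hs
    have : 0 ≤ c * s := mul_nonneg hc.le hs
    positivity
  refine ⟨key, hnn, ?_⟩
  have h1 := key 1 ⟨zero_le_one, le_refl 1⟩
  have htsum : ∑' k : ℕ, ∫ s, Real.exp (-c * s) * (c * s) ^ k / (Nat.factorial k) ∂μ = 1 := by
    simpa [Real.zero_rpow hγ0.ne'] using h1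
  have hsum : Summable
      (fun k : ℕ => ∫ s, Real.exp (-c * s) * (c * s) ^ k / (Nat.factorial k) ∂μ) := by
    by_contra h
    rw [tsum_eq_zero_of_not_summable h] at htsum
    norm_num at htsum
  exact hsum.hasSum_iff.mpr htsum
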